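/- Bi-partite graphs with a constrained total number of links have equivalent ensembles: with K = n₁n₂, L = λK an integer, λ ∈ (0,1), the relative entropy -log[ C(n₁n₂, λn₁n₂) λ^{λn₁n₂} (1-λ)^{(1-λ)n₁n₂} ] is o(n₁+n₂) as n₁, n₂ → ∞. -/

import Mathlib

open Filter Real

lemma ratio_eq (lam : ℝ) (K i : ℕ) (hiK : i < K) :
    ((K.choose (i+1) : ℝ) * lam^(i+1) * (1-lam)^(K-(i+1))) * ((i+1) * (1-lam))
      = ((K.choose i : ℝ) * lam^i * (1-lam)^(K-i)) * (((K:ℝ)-i) * lam) := by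
  have h1 : ((K.choose (i+1) : ℝ)) * (i+1) = (K.choose i) * ((K:ℝ) - i) := by
    have hc := congrArg (Nat.cast (R := ℝ)) (Nat.choose_succ_right_eq K i)
    push_cast [Nat.cast_sub hiK.le] at hc
    linarith
  have h2 : K - i = (K - (i+1)) + 1 := by omega
  rw [h2, pow_succ, pow_succ]
  linear_combination (lam ^ i * lam * (1 - lam) ^ (K - (i + 1)) * (1 - lam)) * h1

lemma term_max (lam : ℝ) (hlam0 : 0 < lam) (hlam1 : lam < 1) (K l : ℕ)
    (hl : (l : ℝ) = lam * K) :
    ∀ i ≤ K, (K.choose i : ℝ) * lam^i * (1-lam)^(K-i)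
      ≤ (K.choose l : ℝ) * lam^l * (1-lam)^(K-l) := by
  set t : ℕ → ℝ := fun i => (K.choose i : ℝ) * lam^i * (1-lam)^(K-i) with ht
  have hlK : l ≤ K := by
    by_contra h
    push_neg at h
    have : (K:ℝ) < l := by exact_mod_cast h
    nlinarith [hl, Nat.cast_nonneg (α := ℝ) K]
  have h1l : (0:ℝ) < 1 - lam := by linarith
  have htpos : ∀ i ≤ K, 0 < t i := by
    intro i hi
    have : 0 < (K.choose i : ℝ) := by exact_mod_cast Nat.choose_pos hi
    positivity
  -- increasing up to l
  have hinc : ∀ i, i < l → t i ≤ t (i+1) := by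
    intro i hil
    have hiK : i < K := lt_of_lt_of_le hil hlK
    have heq := ratio_eq lam K i hiK
    have hb : ((i:ℝ)+1) * (1-lam) ≤ ((K:ℝ)-(i:ℝ)) * lam := by
      have h1 : (i:ℝ) + 1 ≤ l := by exact_mod_cast hil
      nlinarith [hl]
    have hA : (0:ℝ) < ((i:ℝ)+1) * (1-lam) := by positivity
    have hti := htpos i hiK.le
    have e1 : t (i+1) * (((i:ℝ)+1) * (1-lam)) = t i * (((K:ℝ)-(i:ℝ)) * lam) := heq
    have e2 : t i * (((i:ℝ)+1) * (1-lam)) ≤ t i * (((K:ℝ)-(i:ℝ)) * lam) :=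
      mul_le_mul_of_nonneg_left hb hti.le
    exact le_of_mul_le_mul_right (by linarith) hA
  -- decreasing after l
  have hdec : ∀ i, l ≤ i → i < K → t (i+1) ≤ t i := by
    intro i hli hiK
    have heq := ratio_eq lam K i hiK
    have hb : ((K:ℝ)-(i:ℝ)) * lam ≤ ((i:ℝ)+1) * (1-lam) := by
      have h1 : (l:ℝ) ≤ i := by exact_mod_cast hli
      nlinarith [hl]
    have hA : (0:ℝ) < ((i:ℝ)+1) * (1-lam) := by positivity
    have hti := htpos i hiK.le
    have e1 : t (i+1) * (((i:ℝ)+1) * (1-lam)) = t i * (((K:ℝ)-(i:ℝ)) * lam) := heq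
    have e2 : t i * (((K:ℝ)-(i:ℝ)) * lam) ≤ t i * (((i:ℝ)+1) * (1-lam)) :=
      mul_le_mul_of_nonneg_left hb hti.le
    exact le_of_mul_le_mul_right (by linarith) hA
  intro i hiK
  rcases le_or_gt i l with h | h
  · -- climb from i to l
    obtain ⟨d, hd⟩ := Nat.le.dest h
    clear hiK
    induction d generalizing i with
    | zero => simp at hd; simp [hd]
    | succ d ih =>
      have hi1 : i < l := by omega
      calc t i ≤ t (i+1) := hinc i hi1
        _ ≤ t l := ih (i+1) (by omega) (by omega)
  · obtain ⟨d, hd⟩ := Nat.le.dest h.le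
    subst hd
    clear h
    induction d with
    | zero => simp
    | succ d ih =>
      have h2 : l + d < K := by omega
      calc t (l + (d+1)) = t ((l+d)+1) := by ring_nf
        _ ≤ t (l+d) := hdec (l+d) (by omega) h2
        _ ≤ t l := ih (by omega)

lemma term_ge (lam : ℝ) (hlam0 : 0 < lam) (hlam1 : lam < 1) (K l : ℕ)
    (hl : (l : ℝ) = lam * K) :
    1/((K:ℝ)+1) ≤ (K.choose l : ℝ) * lam^l * (1-lam)^(K-l) ∧
      (K.choose l : ℝ) * lam^l * (1-lam)^(K-l) ≤ 1 := by
  have h1l : (0:ℝ) < 1 - lam := by linarith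
  have hlK : l ≤ K := by
    by_contra h
    push_neg at h
    have : (K:ℝ) < l := by exact_mod_cast h
    nlinarith [hl, Nat.cast_nonneg (α := ℝ) K]
  have hsum : ∑ i ∈ Finset.range (K+1),
      (K.choose i : ℝ) * lam^i * (1-lam)^(K-i) = 1 := by
    have h2 : ∑ i ∈ Finset.range (K+1), (K.choose i : ℝ) * lam^i * (1-lam)^(K-i)
        = (lam + (1-lam))^K := by
      rw [add_pow]
      apply Finset.sum_congr rfl
      intro i _
      ring
    rw [h2]
    norm_num
  have hmax := term_max lam hlam0 hlam1 K l hl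
  constructor
  · have hstep : ∑ i ∈ Finset.range (K+1), (K.choose i : ℝ) * lam^i * (1-lam)^(K-i)
        ≤ ((K:ℝ)+1) * ((K.choose l : ℝ) * lam^l * (1-lam)^(K-l)) := by
      calc ∑ i ∈ Finset.range (K+1), (K.choose i : ℝ) * lam^i * (1-lam)^(K-i)
          ≤ ∑ _i ∈ Finset.range (K+1), (K.choose l : ℝ) * lam^l * (1-lam)^(K-l) := by
            apply Finset.sum_le_sum
            intro i hi
            exact hmax i (Nat.lt_succ_iff.mp (Finset.mem_range.mp hi))
        _ = ((K:ℝ)+1) * ((K.choose l : ℝ) * lam^l * (1-lam)^(K-l)) := by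
            rw [Finset.sum_const, Finset.card_range, nsmul_eq_mul]; push_cast; ring
    have hle : (1:ℝ) ≤ ((K:ℝ)+1) * ((K.choose l : ℝ) * lam^l * (1-lam)^(K-l)) := by
      linarith
    rw [div_le_iff₀ (by positivity)]
    linarith
  · have := Finset.single_le_sum (f := fun i => (K.choose i : ℝ) * lam^i * (1-lam)^(K-i))
      (fun i _ => by positivity) (Finset.mem_range.mpr (Nat.lt_succ_of_le hlK))
    simpa [hsum] using le_trans this (le_of_eq hsum)

lemma log_succ_div_tendsto : Filter.Tendsto (fun x : ℝ => Real.log (x+1) / x)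
    Filter.atTop (nhds 0) := by
  have h1 : (fun x : ℝ => Real.log (x+1)) =o[atTop] (fun x : ℝ => x + 1) := by
    simpa [Function.comp_def] using Real.isLittleO_log_id_atTop.comp_tendsto
      (tendsto_atTop_add_const_right atTop 1 tendsto_id)
  have h2 : (fun x : ℝ => x + 1) =O[atTop] (fun x : ℝ => x) := by
    apply Asymptotics.IsBigO.of_bound 2
    filter_upwards [eventually_ge_atTop (1:ℝ)] with x hx
    rw [Real.norm_eq_abs, Real.norm_eq_abs, abs_of_nonneg (by linarith), abs_of_nonneg (by linarith)]
    linarith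
  exact (h1.trans_isBigO h2).tendsto_div_nhds_zero

/-- bi-partite graphs with a constrained total number of links
`L = λ n₁ n₂` have equivalent ensembles: the relative entropy
`- log[ C(n₁n₂, L) λ^L (1-λ)^{n₁n₂ - L} ]` is `o(n₁ + n₂)` as `n₁, n₂ → ∞`. -/
theorem bipartite_links_equivalence (lam : ℝ) (hlam0 : 0 < lam) (hlam1 : lam < 1)
    (n₁ n₂ : ℕ → ℕ) (hn₁ : Filter.Tendsto n₁ Filter.atTop Filter.atTop)
    (hn₂ : Filter.Tendsto n₂ Filter.atTop Filter.atTop)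
    (L : ℕ → ℕ) (hL : ∀ j : ℕ, (L j : ℝ) = lam * (n₁ j * n₂ j : ℕ)) :
    Filter.Tendsto
      (fun j : ℕ =>
        (-Real.log (((n₁ j * n₂ j).choose (L j) : ℝ) * lam ^ (L j) *
            (1 - lam) ^ (n₁ j * n₂ j - L j))) / ((n₁ j : ℝ) + n₂ j))
      Filter.atTop (nhds 0) := by
  set g : ℕ → ℝ := fun j => Real.log ((n₁ j : ℝ) + 1) / (n₁ j) +
      Real.log ((n₂ j : ℝ) + 1) / (n₂ j) with hg
  have hcast₁ : Filter.Tendsto (fun j => ((n₁ j : ℝ))) atTop atTop :=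
    tendsto_natCast_atTop_atTop.comp hn₁
  have hcast₂ : Filter.Tendsto (fun j => ((n₂ j : ℝ))) atTop atTop :=
    tendsto_natCast_atTop_atTop.comp hn₂
  have hgt : Filter.Tendsto g atTop (nhds 0) := by
    have := (log_succ_div_tendsto.comp hcast₁).add (log_succ_div_tendsto.comp hcast₂)
    simpa using this
  apply squeeze_zero' ?_ ?_ hgt
  · filter_upwards [hn₁.eventually (eventually_ge_atTop 1),
      hn₂.eventually (eventually_ge_atTop 1)] with j h1 h2
    have hle1 := (term_ge lam hlam0 hlam1 (n₁ j * n₂ j) (L j) (hL j)).2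
    have hge := (term_ge lam hlam0 hlam1 (n₁ j * n₂ j) (L j) (hL j)).1
    have hpos : (0:ℝ) < ((n₁ j * n₂ j).choose (L j) : ℝ) * lam ^ (L j) *
        (1 - lam) ^ (n₁ j * n₂ j - L j) := lt_of_lt_of_le (by positivity) hge
    have hlog : Real.log (((n₁ j * n₂ j).choose (L j) : ℝ) * lam ^ (L j) *
        (1 - lam) ^ (n₁ j * n₂ j - L j)) ≤ 0 := Real.log_nonpos hpos.le hle1
    have hden : (0:ℝ) < (n₁ j : ℝ) + n₂ j := by
      have : (1:ℝ) ≤ n₁ j := by exact_mod_cast h1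
      have : (1:ℝ) ≤ n₂ j := by exact_mod_cast h2
      linarith
    exact div_nonneg (by linarith) hden.le
  · filter_upwards [hn₁.eventually (eventually_ge_atTop 1),
      hn₂.eventually (eventually_ge_atTop 1)] with j h1 h2
    have h1r : (1:ℝ) ≤ n₁ j := by exact_mod_cast h1
    have h2r : (1:ℝ) ≤ n₂ j := by exact_mod_cast h2
    have hge := (term_ge lam hlam0 hlam1 (n₁ j * n₂ j) (L j) (hL j)).1
    have hpos : (0:ℝ) < ((n₁ j * n₂ j).choose (L j) : ℝ) * lam ^ (L j) *
        (1 - lam) ^ (n₁ j * n₂ j - L j) := lt_of_lt_of_le (by positivity) hge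
    -- -log t ≤ log (K+1)
    have hlogK : -Real.log (((n₁ j * n₂ j).choose (L j) : ℝ) * lam ^ (L j) *
        (1 - lam) ^ (n₁ j * n₂ j - L j)) ≤ Real.log (((n₁ j * n₂ j : ℕ):ℝ) + 1) := by
      have := Real.log_le_log (by positivity) hge
      rw [one_div, Real.log_inv] at this
      linarith
    have hKle : ((n₁ j * n₂ j : ℕ):ℝ) + 1 ≤ ((n₁ j : ℝ) + 1) * ((n₂ j : ℝ) + 1) := by
      push_cast
      nlinarith
    have hlogsplit : Real.log (((n₁ j * n₂ j : ℕ):ℝ) + 1) ≤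
        Real.log ((n₁ j : ℝ) + 1) + Real.log ((n₂ j : ℝ) + 1) := by
      calc Real.log (((n₁ j * n₂ j : ℕ):ℝ) + 1)
          ≤ Real.log (((n₁ j : ℝ) + 1) * ((n₂ j : ℝ) + 1)) :=
            Real.log_le_log (by positivity) hKle
        _ = Real.log ((n₁ j : ℝ) + 1) + Real.log ((n₂ j : ℝ) + 1) :=
            Real.log_mul (by positivity) (by positivity)
    have hden : (0:ℝ) < (n₁ j : ℝ) + n₂ j := by linarith
    have hlog1 : 0 ≤ Real.log ((n₁ j : ℝ) + 1) := Real.log_nonneg (by linarith)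
    have hlog2 : 0 ≤ Real.log ((n₂ j : ℝ) + 1) := Real.log_nonneg (by linarith)
    calc (-Real.log (((n₁ j * n₂ j).choose (L j) : ℝ) * lam ^ (L j) *
            (1 - lam) ^ (n₁ j * n₂ j - L j))) / ((n₁ j : ℝ) + n₂ j)
        ≤ (Real.log ((n₁ j : ℝ) + 1) + Real.log ((n₂ j : ℝ) + 1)) / ((n₁ j : ℝ) + n₂ j) := by
          gcongr
          linarith [hlogK, hlogsplit]
      _ = Real.log ((n₁ j : ℝ) + 1) / ((n₁ j : ℝ) + n₂ j) +
            Real.log ((n₂ j : ℝ) + 1) / ((n₁ j : ℝ) + n₂ j) := add_div _ _ _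
      _ ≤ g j := by
          apply add_le_add
          · exact div_le_div_of_nonneg_left hlog1 (by linarith) (by linarith)
          · exact div_le_div_of_nonneg_left hlog2 (by linarith) (by linarith)
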